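/- Suppose N is compact Kähler with nonnegative holomorphic bisectional curvature, u solves harmonic map flow on Σ×[0,T) with E_∂̄(u(0)) ≤ δ² < ε₀, and |∂̄u(t)| ≤ Cδ(1/√τ + 1) for τ ≤ t < T. Then the stress-energy tensor satisfies the uniform L² bound ‖S(u(t))‖²_{L²(Σ)} ≤ C δ²(2δ² + κ)(1/τ + 1) for τ ≤ t < T, where κ = E_∂(u(0)) − E_∂̄(u(0)) is the topological invariant ∫_Σ u*ω_N. -/
import Mathlib


open MeasureTheory

/-- Corollary 4.6, first part: uniform `L²` bound on the stress-energy
tensor.  `Σ` (here an abstract measure space `(X,μ)` carrying the volume of the surface)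
is the domain of a harmonic map flow `u` into a compact Kähler manifold of nonnegative
holomorphic bisectional curvature with `E_∂̄(u(0)) ≤ δ² < ε₀`.  Here `ed t, edb t` are
the densities `e_∂(u(t)), e_∂̄(u(t))`, `Snorm t = |S(u(t))|`; the pointwise bound
`|S| ≤ 4√(e_∂ e_∂̄)` holds (Lemma 2.3), `sup |∂̄u(t)| ≤ C₁δ(1/√τ + 1)` on `[τ,T)`
(Theorem 3.5), `E_∂(u(t)) = ∫ e_∂(t)` is nonincreasing with `E_∂(u(0)) ≤ 2δ² + κ`, where
`κ = ∫_Σ u*ω_N`.  Conclusion: `‖S(u(t))‖²_{L²(Σ)} ≤ C δ²(2δ² + κ)(1/τ + 1)` for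
`τ ≤ t < T`. -/
theorem stmt12 {X : Type*} [MeasurableSpace X] (μ : Measure X)
    (C₁ : ℝ) (hC₁ : 0 < C₁) :
    ∃ C > (0 : ℝ), ∀ (δ κ τ T : ℝ) (ed edb Snorm : ℝ → X → ℝ),
      0 < δ → 0 < τ → τ < T →
      (∀ t x, 0 ≤ ed t x) → (∀ t x, 0 ≤ edb t x) → (∀ t x, 0 ≤ Snorm t x) →
      (∀ t x, Snorm t x ≤ 4 * Real.sqrt (ed t x * edb t x)) →
      (∀ t ∈ Set.Ico τ T, ∀ x, edb t x ≤ (C₁ * δ * (1 / Real.sqrt τ + 1)) ^ 2) →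
      (∀ s t : ℝ, s ≤ t → (∫ x, ed t x ∂μ) ≤ ∫ x, ed s x ∂μ) →
      ((∫ x, ed 0 x ∂μ) ≤ 2 * δ ^ 2 + κ) →
      (∀ t, Integrable (ed t) μ) →
      (∀ t ∈ Set.Ico τ T, Integrable (fun x => (Snorm t x) ^ 2) μ) →
      ∀ t ∈ Set.Ico τ T,
        (∫ x, (Snorm t x) ^ 2 ∂μ) ≤ C * δ ^ 2 * (2 * δ ^ 2 + κ) * (1 / τ + 1) := by
  refine ⟨32 * C₁ ^ 2, by positivity, ?_⟩
  intro δ κ τ T ed edb Snorm hδ hτ hτT hed hedb hS hSbound hedbB hmono hE0 hInt hIntS t ht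
  set B : ℝ := (C₁ * δ * (1 / Real.sqrt τ + 1)) ^ 2 with hB
  have hBnn : 0 ≤ B := sq_nonneg _
  -- pointwise bound
  have hpt : ∀ x, Snorm t x ^ 2 ≤ 16 * B * ed t x := by
    intro x
    have h1 : Snorm t x ^ 2 ≤ (4 * Real.sqrt (ed t x * edb t x)) ^ 2 :=
      pow_le_pow_left₀ (hS t x) (hSbound t x) 2
    have h2 : (4 * Real.sqrt (ed t x * edb t x)) ^ 2 = 16 * (ed t x * edb t x) := by
      rw [mul_pow, Real.sq_sqrt (mul_nonneg (hed t x) (hedb t x))]; norm_num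
    have h3 : ed t x * edb t x ≤ ed t x * B :=
      mul_le_mul_of_nonneg_left (hedbB t ht x) (hed t x)
    calc Snorm t x ^ 2 ≤ 16 * (ed t x * edb t x) := by rw [← h2]; exact h1
      _ ≤ 16 * (ed t x * B) := by linarith
      _ = 16 * B * ed t x := by ring
  -- integrate
  have hint1 : (∫ x, Snorm t x ^ 2 ∂μ) ≤ ∫ x, 16 * B * ed t x ∂μ :=
    integral_mono (hIntS t ht) ((hInt t).const_mul _) hpt
  have h2 : (∫ x, 16 * B * ed t x ∂μ) = 16 * B * ∫ x, ed t x ∂μ :=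
    integral_const_mul _ _
  have h3 : (∫ x, ed t x ∂μ) ≤ 2 * δ ^ 2 + κ :=
    le_trans (hmono 0 t (le_trans hτ.le ht.1)) hE0
  have hEnn : 0 ≤ (∫ x, ed t x ∂μ) := integral_nonneg (fun x => hed t x)
  have hκnn : 0 ≤ 2 * δ ^ 2 + κ := le_trans hEnn h3
  have hsτ : 0 < Real.sqrt τ := Real.sqrt_pos.mpr hτ
  -- (1/√τ + 1)^2 ≤ 2 * (1/τ + 1)
  have hsq : (1 / Real.sqrt τ + 1) ^ 2 ≤ 2 * (1 / τ + 1) := by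
    have h1 : (1 / Real.sqrt τ) ^ 2 = 1 / τ := by
      rw [div_pow, one_pow, Real.sq_sqrt hτ.le]
    have h2 : 2 * (1 / Real.sqrt τ) ≤ (1 / Real.sqrt τ) ^ 2 + 1 := by
      nlinarith [sq_nonneg (1 / Real.sqrt τ - 1)]
    nlinarith [h1]
  have hBle : 16 * B ≤ 32 * C₁ ^ 2 * δ ^ 2 * (1 / τ + 1) := by
    have : B = C₁ ^ 2 * δ ^ 2 * (1 / Real.sqrt τ + 1) ^ 2 := by rw [hB]; ring
    rw [this]
    have hc : 0 ≤ C₁ ^ 2 * δ ^ 2 := by positivity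
    nlinarith [mul_le_mul_of_nonneg_left hsq hc]
  calc (∫ x, Snorm t x ^ 2 ∂μ) ≤ 16 * B * ∫ x, ed t x ∂μ := h2 ▸ hint1
    _ ≤ 16 * B * (2 * δ ^ 2 + κ) := mul_le_mul_of_nonneg_left h3 (by positivity)
    _ ≤ 32 * C₁ ^ 2 * δ ^ 2 * (1 / τ + 1) * (2 * δ ^ 2 + κ) :=
        mul_le_mul_of_nonneg_right hBle hκnn
    _ = 32 * C₁ ^ 2 * δ ^ 2 * (2 * δ ^ 2 + κ) * (1 / τ + 1) := by ring
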